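/- If n, i, j are natural numbers with n ≥ 1, i ≥ 1, j ≥ 1, q is an odd prime, q^i divides n, and m ≥ 1, then S_n(m + q^j) ≡ S_n(q^j) + S_n(m) (mod q^(i+j)). -/

import Mathlib

def S (n m : ℕ) : ℕ := ∑ i ∈ Finset.Icc 1 m, i ^ n

lemma val_choose_aux (q : ℕ) (hq : q.Prime) (n t : ℕ) (ht : 1 ≤ t) (htn : t ≤ n) :
    padicValNat q n ≤ padicValNat q t + padicValNat q (n.choose t) := by
  haveI : Fact q.Prime := ⟨hq⟩
  obtain ⟨n, rfl⟩ := Nat.exists_eq_add_of_le (Nat.one_le_of_lt (Nat.lt_of_lt_of_le ht htn) : 1 ≤ n)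
  obtain ⟨t, rfl⟩ := Nat.exists_eq_add_of_le ht
  have h : (1 + t) * (1 + n).choose (1 + t) = (1 + n) * n.choose t := by
    have := Nat.add_one_mul_choose_eq n t
    rw [add_comm 1 t, add_comm 1 n, this, mul_comm]
  have hc1 : (1 + n).choose (1 + t) ≠ 0 := (Nat.choose_pos (by omega)).ne'
  have hc2 : n.choose t ≠ 0 := (Nat.choose_pos (by omega)).ne'
  have hv := congrArg (padicValNat q) h
  rw [padicValNat.mul (by omega) hc1, padicValNat.mul (by omega) hc2] at hv
  omega

lemma val_le (q : ℕ) (hq : q.Prime) (hq3 : 3 ≤ q) (t : ℕ) (ht : 1 ≤ t) :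
    padicValNat q t ≤ t - 1 := by
  haveI : Fact q.Prime := ⟨hq⟩
  have h1 : q ^ padicValNat q t ∣ t := pow_padicValNat_dvd
  have h2 : q ^ padicValNat q t ≤ t := Nat.le_of_dvd (by omega) h1
  have h3 : padicValNat q t < 2 ^ padicValNat q t := Nat.lt_two_pow_self
  have h4 : 2 ^ padicValNat q t ≤ q ^ padicValNat q t :=
    Nat.pow_le_pow_left (by omega) _
  omega

lemma key (n i j q : ℕ) (hn : 1 ≤ n) (hi : 1 ≤ i) (hj : 1 ≤ j)
    (hq : q.Prime) (hodd : Odd q) (hdvd : q ^ i ∣ n) (a : ℕ) :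
    (a + q ^ j) ^ n ≡ a ^ n [MOD q ^ (i + j)] := by
  haveI : Fact q.Prime := ⟨hq⟩
  have hq3 : 3 ≤ q := by
    have h2 := hq.two_le
    have hne : q ≠ 2 := by rintro rfl; exact absurd hodd (by decide)
    omega
  have hvn : i ≤ padicValNat q n :=
    (padicValNat_dvd_iff_le (by omega : n ≠ 0)).mp hdvd
  rw [add_pow]
  rw [Finset.sum_range_succ]
  simp only [Nat.sub_self, pow_zero, Nat.choose_self, mul_one, one_mul, Nat.cast_id]
  have hdvdsum : q ^ (i + j) ∣ ∑ k ∈ Finset.range n, a ^ k * (q ^ j) ^ (n - k) * n.choose k := by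
    apply Finset.dvd_sum
    intro k hk
    rw [Finset.mem_range] at hk
    have hck : n.choose k = n.choose (n - k) := (Nat.choose_symm hk.le).symm
    rw [hck]
    obtain ⟨t', ht'⟩ : ∃ t', n - k = t' + 1 := ⟨n - k - 1, by omega⟩
    rw [ht']
    have ht1 : 1 ≤ t' + 1 := by omega
    have htn : t' + 1 ≤ n := by omega
    have hv1 := val_choose_aux q hq n (t' + 1) ht1 htn
    have hv2 := val_le q hq hq3 (t' + 1) ht1
    set v := padicValNat q (n.choose (t' + 1)) with hvdef
    have hiv : i ≤ v + t' := by omega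
    have hqv : q ^ v ∣ n.choose (t' + 1) := pow_padicValNat_dvd
    have hmain : q ^ (i + j) ∣ (q ^ j) ^ (t' + 1) * q ^ v := by
      rw [← pow_mul, ← pow_add]
      apply pow_dvd_pow
      have h6 : t' ≤ j * t' := Nat.le_mul_of_pos_left t' (by omega)
      have h7 : j * (t' + 1) = j * t' + j := by ring
      omega
    calc q ^ (i + j) ∣ (q ^ j) ^ (t' + 1) * q ^ v := hmain
      _ ∣ a ^ k * (q ^ j) ^ (t' + 1) * n.choose (t' + 1) :=
        mul_dvd_mul (dvd_mul_left _ _) hqv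
  calc (∑ k ∈ Finset.range n, a ^ k * (q ^ j) ^ (n - k) * n.choose k) + a ^ n
      ≡ 0 + a ^ n [MOD q ^ (i + j)] :=
        Nat.ModEq.add_right _ ((Nat.modEq_zero_iff_dvd).mpr hdvdsum)
    _ = a ^ n := by ring

lemma S_succ (n m : ℕ) : S n (m + 1) = S n m + (m + 1) ^ n := by
  unfold S
  rw [Finset.sum_Icc_succ_top (by omega : 1 ≤ m + 1)]

theorem stmt16 (n i j m q : ℕ) (hn : 1 ≤ n) (hi : 1 ≤ i) (hj : 1 ≤ j) (hm : 1 ≤ m)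
    (hq : q.Prime) (hodd : Odd q) (hdvd : q ^ i ∣ n) :
    S n (m + q ^ j) ≡ S n (q ^ j) + S n m [MOD q ^ (i + j)] := by
  clear hm
  induction m with
  | zero => simp only [Nat.zero_add, S, Finset.Icc_self]; simp [Finset.Icc_eq_empty_of_lt]; rfl
  | succ m ih =>
    have h1 : m + 1 + q ^ j = (m + q ^ j) + 1 := by omega
    rw [h1, S_succ, S_succ]
    have h2 : m + q ^ j + 1 = (m + 1) + q ^ j := by omega
    rw [h2, ← add_assoc]
    exact ih.add (key n i j q hn hi hj hq hodd hdvd (m + 1))
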